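/- Let H be an infinite-dimensional separable complex Hilbert space. Then the topological stable rank of B(H) is infinite: for every n, the set of n-tuples (A₁,...,Aₙ) of operators admitting Bᵢ with Σ AᵢBᵢ = I is not dense in B(H)ⁿ. -/

import Mathlib

/-- `n`-tuples generating `A` as a left ideal. -/
noncomputable def Lg (A : Type*) [NormedRing A] (n : ℕ) : Set (Fin n → A) :=
  {a | ∃ b : Fin n → A, ∑ i, b i * a i = 1}

/-- `n`-tuples generating `A` as a right ideal. -/
noncomputable def Rg (A : Type*) [NormedRing A] (n : ℕ) : Set (Fin n → A) :=
  {a | ∃ b : Fin n → A, ∑ i, a i * b i = 1}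

/-- The left topological stable rank. -/
noncomputable def ltsr (A : Type*) [NormedRing A] : ℕ∞ :=
  sInf {N : ℕ∞ | ∃ n : ℕ, N = n ∧ Dense (Lg A n)}

/-- The right topological stable rank. -/
noncomputable def rtsr (A : Type*) [NormedRing A] : ℕ∞ :=
  sInf {N : ℕ∞ | ∃ n : ℕ, N = n ∧ Dense (Rg A n)}

open Submodule Function ContinuousLinearMap
open scoped InnerProductSpace ComplexConjugate

noncomputable section Aux
set_option linter.unusedSectionVars false

variable {H : Type*} [NormedAddCommGroup H] [InnerProductSpace ℂ H] [CompleteSpace H]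

local notation "⟪" x ", " y "⟫" => @inner ℂ _ _ x y

lemma vec_ext (b : HilbertBasis ℕ ℂ H) {x y : H} (h : ∀ k, ⟪b k, x⟫ = ⟪b k, y⟫) : x = y := by
  apply b.repr.injective
  ext k
  rw [b.repr_apply_apply, b.repr_apply_apply]
  exact h k

lemma op_ext (b : HilbertBasis ℕ ℂ H) {f g : H →L[ℂ] H} (h : ∀ k, f (b k) = g (b k)) :
    f = g := by
  apply ContinuousLinearMap.ext_on (s := Set.range b)
  · have := b.dense_span
    rw [← Submodule.dense_iff_topologicalClosure_eq_top] at this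
    exact this
  · rintro _ ⟨k, rfl⟩; exact h k

lemma inner_basis (b : HilbertBasis ℕ ℂ H) (k l : ℕ) :
    ⟪b k, b l⟫ = if k = l then 1 else 0 := by
  classical
  rcases eq_or_ne k l with rfl | h
  · simp [inner_self_eq_norm_sq_to_K, b.orthonormal.1 k]
  · simp [h, b.orthonormal.2 h]

def shiftOp (b : HilbertBasis ℕ ℂ H) {g : ℕ → ℕ} (hg : Function.Injective g) : H →L[ℂ] H :=
  (((b.orthonormal.comp g hg).orthogonalFamily.linearIsometry).comp
    b.repr.toLinearIsometry).toContinuousLinearMap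

lemma shiftOp_apply_basis (b : HilbertBasis ℕ ℂ H) {g : ℕ → ℕ} (hg : Function.Injective g)
    (k : ℕ) : shiftOp b hg (b k) = b (g k) := by
  classical
  have : b.repr (b k) = lp.single 2 k (1 : ℂ) := b.repr_self k
  simp only [shiftOp, LinearIsometry.coe_toContinuousLinearMap, LinearIsometry.coe_comp,
    Function.comp_apply, LinearIsometryEquiv.coe_toLinearIsometry, this,
    OrthogonalFamily.linearIsometry_apply_single, LinearIsometry.toSpanSingleton_apply, one_smul]

lemma shiftOp_norm_map (b : HilbertBasis ℕ ℂ H) {g : ℕ → ℕ} (hg : Function.Injective g)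
    (x : H) : ‖shiftOp b hg x‖ = ‖x‖ :=
  LinearIsometry.norm_map _ x

lemma adjoint_shiftOp_basis_eq (b : HilbertBasis ℕ ℂ H) {g : ℕ → ℕ} (hg : Function.Injective g)
    {k m : ℕ} (hk : g k = m) : adjoint (shiftOp b hg) (b m) = b k := by
  classical
  apply vec_ext b
  intro j
  rw [adjoint_inner_right, shiftOp_apply_basis, inner_basis, inner_basis]
  subst hk
  simp [hg.eq_iff]

lemma adjoint_shiftOp_basis_zero (b : HilbertBasis ℕ ℂ H) {g : ℕ → ℕ}
    (hg : Function.Injective g) {m : ℕ} (hm : ∀ k, g k ≠ m) :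
    adjoint (shiftOp b hg) (b m) = 0 := by
  classical
  apply vec_ext b
  intro j
  rw [adjoint_inner_right, shiftOp_apply_basis, inner_basis]
  simp [hm j]

lemma not_dense_Rg (b : HilbertBasis ℕ ℂ H) (n : ℕ) (hn : 0 < n) :
    ¬ Dense (Rg (H →L[ℂ] H) n) := by
  classical
  intro hD
  have hgW : ∀ i : Fin n, Function.Injective fun k => n * k + (i : ℕ) := by
    intro i k l h
    simp only [add_left_inj] at h
    exact Nat.eq_of_mul_eq_mul_left hn h
  have hgV : Function.Injective Nat.succ := Nat.succ_injective
  set W : Fin n → H →L[ℂ] H := fun i => shiftOp b (hgW i) with hWdef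
  set V : H →L[ℂ] H := shiftOp b hgV with hVdef
  -- key identities
  have key1 : ∀ i j : Fin n, adjoint (W i) * W j = if i = j then 1 else 0 := by
    intro i j
    apply op_ext b
    intro l
    rw [mul_apply_eq_comp]
    rw [hWdef]
    rw [shiftOp_apply_basis]
    rcases eq_or_ne i j with rfl | hij
    · rw [adjoint_shiftOp_basis_eq b (hgW i) rfl]
      simp
    · rw [adjoint_shiftOp_basis_zero b (hgW i)]
      · simp [hij]
      · intro k hk
        apply hij
        have h1 : (n * k + (i : ℕ)) % n = (n * l + (j : ℕ)) % n := by rw [hk]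
        rw [Nat.mul_add_mod, Nat.mul_add_mod, Nat.mod_eq_of_lt i.isLt,
          Nat.mod_eq_of_lt j.isLt] at h1
        exact Fin.ext h1
  have key2 : ∑ i, W i * adjoint (W i) = 1 := by
    apply op_ext b
    intro m
    rw [ContinuousLinearMap.sum_apply]
    set i₀ : Fin n := ⟨m % n, Nat.mod_lt m hn⟩ with hi₀
    have : ∀ i : Fin n, (W i * adjoint (W i)) (b m) = if i = i₀ then b m else 0 := by
      intro i
      rw [mul_apply_eq_comp]
      rcases eq_or_ne i i₀ with h | hi
      · have hk : n * (m / n) + (i : ℕ) = m := by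
          rw [h]
          exact Nat.div_add_mod m n
        rw [adjoint_shiftOp_basis_eq b (hgW i) hk, hWdef, shiftOp_apply_basis, hk, if_pos h]
      · rw [adjoint_shiftOp_basis_zero b (hgW i), map_zero, if_neg hi]
        intro k hk
        apply hi
        have h1 : (n * k + (i : ℕ)) % n = m % n := by rw [hk]
        rw [Nat.mul_add_mod, Nat.mod_eq_of_lt i.isLt] at h1
        exact Fin.ext h1
    rw [Finset.sum_congr rfl fun i _ => this i, Finset.sum_ite_eq' Finset.univ i₀]
    simp
  have hVadj : adjoint V (b 0) = 0 :=
    adjoint_shiftOp_basis_zero b hgV fun k => Nat.succ_ne_zero k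
  -- the tuple
  set a : Fin n → H →L[ℂ] H := fun i => V * W i with hadef
  set ε : ℝ := 1 / (2 * n + 2) with hεdef
  have h2n : (0:ℝ) < 2 * n + 2 := by positivity
  have hε : 0 < ε := by rw [hεdef]; positivity
  obtain ⟨a', ha'Rg, hdista⟩ := Metric.mem_closure_iff.mp (hD a) ε hε
  obtain ⟨b', hb'⟩ := ha'Rg
  have hai : ∀ i, ‖a' i - a i‖ < ε := by
    intro i
    have := (dist_pi_lt_iff hε).mp hdista i
    rwa [dist_eq_norm, norm_sub_rev] at this
  set S' : H →L[ℂ] H := ∑ i, a' i * adjoint (W i) with hS'def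
  set c : H →L[ℂ] H := ∑ i, W i * b' i with hcdef
  have hS : ∑ i, a i * adjoint (W i) = V := by
    simp only [hadef, mul_assoc, ← Finset.mul_sum, key2, mul_one]
  have hE : ‖S' - V‖ < 1 / 2 := by
    have hEeq : S' - V = ∑ i, (a' i - a i) * adjoint (W i) := by
      rw [← hS, hS'def, ← Finset.sum_sub_distrib]
      refine Finset.sum_congr rfl fun i _ => ?_
      rw [sub_mul]
    rw [hEeq]
    calc ‖∑ i, (a' i - a i) * adjoint (W i)‖ ≤ ∑ i, ‖(a' i - a i) * adjoint (W i)‖ :=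
          norm_sum_le _ _
      _ < ∑ _i : Fin n, ε := by
          apply Finset.sum_lt_sum_of_nonempty (Finset.univ_nonempty_iff.mpr ⟨⟨0, hn⟩⟩)
          intro i _
          calc ‖(a' i - a i) * adjoint (W i)‖ ≤ ‖a' i - a i‖ * ‖adjoint (W i)‖ := norm_mul_le _ _
            _ ≤ ‖a' i - a i‖ * 1 := by
                apply mul_le_mul_of_nonneg_left _ (norm_nonneg _)
                rw [LinearIsometryEquiv.norm_map]
                exact LinearIsometry.norm_toContinuousLinearMap_le _
            _ = ‖a' i - a i‖ := mul_one _
            _ < ε := hai i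
      _ = n * ε := by rw [Finset.sum_const, Finset.card_univ, Fintype.card_fin, nsmul_eq_mul]
      _ < 1 / 2 := by
          rw [hεdef, mul_one_div, div_lt_div_iff₀ h2n two_pos]
          push_cast
          linarith
  have hlow : ∀ x : H, (1 / 2 : ℝ) * ‖x‖ ≤ ‖S' x‖ := by
    intro x
    have h1 : ‖V x‖ = ‖x‖ := shiftOp_norm_map b hgV x
    have h2 : ‖(S' - V) x‖ ≤ (1/2) * ‖x‖ := by
      calc ‖(S' - V) x‖ ≤ ‖S' - V‖ * ‖x‖ := le_opNorm _ _
        _ ≤ (1/2) * ‖x‖ := by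
            apply mul_le_mul_of_nonneg_right hE.le (norm_nonneg _)
    have h3 : ‖V x‖ ≤ ‖S' x‖ + ‖(S' - V) x‖ := by
      have : V x = S' x - (S' - V) x := by simp
      rw [this]
      exact norm_sub_le _ _
    linarith
  have hSc : S' * c = 1 := by
    rw [hS'def, hcdef, Finset.sum_mul_sum]
    have hterm : ∀ i j : Fin n, (a' i * adjoint (W i)) * (W j * b' j) =
        if i = j then a' i * b' j else 0 := by
      intro i j
      rw [mul_assoc, ← mul_assoc (adjoint (W i)) (W j) (b' j), ← mul_assoc, key1]
      split_ifs with h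
      · rw [mul_assoc, one_mul]
      · rw [mul_zero, zero_mul]
    calc (∑ i, ∑ j, (a' i * adjoint (W i)) * (W j * b' j))
        = ∑ i, ∑ j, if i = j then a' i * b' j else 0 := by
          exact Finset.sum_congr rfl fun i _ => Finset.sum_congr rfl fun j _ => hterm i j
      _ = ∑ i, a' i * b' i := by
          refine Finset.sum_congr rfl fun i _ => ?_
          rw [Finset.sum_ite_eq Finset.univ i]
          simp
      _ = 1 := hb'
  have hinj : Function.Injective S' := by
    intro x y hxy
    have h0 : S' (x - y) = 0 := by rw [map_sub, hxy, sub_self]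
    have := hlow (x - y)
    rw [h0, norm_zero] at this
    have : ‖x - y‖ ≤ 0 := by linarith
    rw [← sub_eq_zero]
    exact norm_le_zero_iff.mp this
  have hcS : c * S' = 1 := by
    ext x
    apply hinj
    calc S' ((c * S') x) = ((S' * c) * S') x := by rw [mul_assoc]; rfl
      _ = S' x := by rw [hSc, one_mul]
      _ = S' ((1 : H →L[ℂ] H) x) := by rw [one_apply_eq_self]
  have hcnorm : ‖c‖ ≤ 2 := by
    apply opNorm_le_bound c (by norm_num)
    intro x
    have h1 : S' (c x) = x := by
      have : (S' * c) x = x := by rw [hSc, one_apply_eq_self]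
      rwa [mul_apply_eq_comp] at this
    have := hlow (c x)
    rw [h1] at this
    linarith
  have hcE : ‖c * (S' - V)‖ < 1 := by
    calc ‖c * (S' - V)‖ ≤ ‖c‖ * ‖S' - V‖ := norm_mul_le _ _
      _ < 1 := by nlinarith [norm_nonneg (S' - V), norm_nonneg c]
  have hVfact : V = S' * (1 - c * (S' - V)) := by
    rw [mul_sub, mul_one, ← mul_assoc, hSc, one_mul, sub_sub_cancel]
  set u : (H →L[ℂ] H)ˣ := (⟨S', c, hSc, hcS⟩ : (H →L[ℂ] H)ˣ) * Units.oneSub _ hcE with hudef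
  have huval : (u : H →L[ℂ] H) = V := by
    rw [hudef, Units.val_mul]
    exact hVfact.symm
  set w : H →L[ℂ] H := ↑u⁻¹ with hwdef
  have hmul : V * w = 1 := by
    rw [← huval, hwdef]
    exact u.mul_inv
  have hb00 : ⟪b 0, b 0⟫ = 1 := by simpa using inner_basis b 0 0
  have h0 : (1 : ℂ) = 0 := by
    calc (1 : ℂ) = ⟪b 0, b 0⟫ := hb00.symm
      _ = ⟪b 0, V (w (b 0))⟫ := by
          have : V (w (b 0)) = b 0 := by
            have := congrArg (fun f : H →L[ℂ] H => f (b 0)) hmul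
            simpa [mul_apply] using this
          rw [this]
      _ = ⟪adjoint V (b 0), w (b 0)⟫ := (adjoint_inner_left V _ _).symm
      _ = 0 := by rw [hVadj, inner_zero_left]
  exact one_ne_zero h0

lemma exists_hilbertBasis_nat [TopologicalSpace.SeparableSpace H]
    (hinf : ¬ FiniteDimensional ℂ H) : Nonempty (HilbertBasis ℕ ℂ H) := by
  classical
  obtain ⟨w, b0, hb0⟩ := exists_hilbertBasis ℂ H
  -- distances between distinct basis vectors are at least 1
  have hdist : ∀ i j : w, i ≠ j → (1 : ℝ) ≤ dist (b0 i) (b0 j) := by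
    intro i j hij
    have h1 : ‖b0 i - b0 j‖ ^ 2 = 2 := by
      have hnorm : ‖b0 i - b0 j‖ ^ 2 = RCLike.re ⟪b0 i - b0 j, b0 i - b0 j⟫ :=
        (norm_sq_eq_re_inner (𝕜 := ℂ) _)
      rw [hnorm, inner_sub_sub_self, b0.orthonormal.2 hij, b0.orthonormal.2 (Ne.symm hij)]
      have : ⟪b0 i, b0 i⟫ = 1 := by
        simp [inner_self_eq_norm_sq_to_K, b0.orthonormal.1 i]
      have h2 : ⟪b0 j, b0 j⟫ = 1 := by
        simp [inner_self_eq_norm_sq_to_K, b0.orthonormal.1 j]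
      rw [this, h2]
      norm_num
    rw [dist_eq_norm]
    nlinarith [norm_nonneg (b0 i - b0 j)]
  have hcount : Countable w := by
    apply Pairwise.countable_of_isOpen_disjoint
      (s := fun i : w => Metric.ball (b0 i) (1/2 : ℝ))
    · intro i j hij
      refine Metric.ball_disjoint_ball ?_
      calc (1/2 : ℝ) + 1/2 = 1 := by norm_num
        _ ≤ dist (b0 i) (b0 j) := hdist i j hij
    · intro i; exact Metric.isOpen_ball
    · intro i; exact Metric.nonempty_ball.2 (by norm_num)
  have hinfw : Infinite w := by
    rw [Set.infinite_coe_iff]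
    intro hfin
    apply hinf
    have hsp := b0.dense_span
    rw [hb0, Subtype.range_coe] at hsp
    haveI : FiniteDimensional ℂ (span ℂ w) := FiniteDimensional.span_of_finite ℂ hfin
    have hcl : (span ℂ w).topologicalClosure = span ℂ w :=
      (span ℂ w).closed_of_finiteDimensional.submodule_topologicalClosure_eq
    rw [hcl] at hsp
    have htop : FiniteDimensional ℂ (⊤ : Submodule ℂ H) := by rw [← hsp]; infer_instance
    exact (Submodule.topEquiv : (⊤ : Submodule ℂ H) ≃ₗ[ℂ] H).finiteDimensional
  letI : Encodable w := Encodable.ofCountable w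
  letI : Denumerable w := Denumerable.ofEncodableOfInfinite w
  let e : ℕ ≃ w := (Denumerable.eqv w).symm
  have hv : Orthonormal ℂ (fun k => b0 (e k)) := b0.orthonormal.comp e e.injective
  refine ⟨HilbertBasis.mk hv ?_⟩
  have : Set.range (fun k => b0 (e k)) = Set.range b0 := by
    rw [show (fun k => b0 (e k)) = b0 ∘ e from rfl, Set.range_comp, e.surjective.range_eq,
      Set.image_univ]
  rw [this, b0.dense_span]

end Aux

/-- For an infinite-dimensional separable complex Hilbert space `H`, the topological stable
rank of `B(H)` is infinite: for every `n`, the right-invertible `n`-tuples are not dense. -/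
theorem stmt9 {H : Type*} [NormedAddCommGroup H] [InnerProductSpace ℂ H] [CompleteSpace H]
    [TopologicalSpace.SeparableSpace H] (hinf : ¬ FiniteDimensional ℂ H) :
    (∀ n : ℕ, ¬ Dense (Rg (H →L[ℂ] H) n)) ∧
      rtsr (H →L[ℂ] H) = ⊤ ∧ ltsr (H →L[ℂ] H) = ⊤ := by
  classical
  haveI : Nontrivial H := by
    by_contra h
    rw [not_nontrivial_iff_subsingleton] at h
    exact hinf inferInstance
  obtain ⟨b⟩ := exists_hilbertBasis_nat (H := H) hinf
  have hRg : ∀ n : ℕ, ¬ Dense (Rg (H →L[ℂ] H) n) := by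
    intro n
    rcases Nat.eq_zero_or_pos n with rfl | hn
    · intro hD
      obtain ⟨x, hx⟩ := hD.nonempty
      obtain ⟨b', hb'⟩ := hx
      rw [Finset.univ_eq_empty, Finset.sum_empty] at hb'
      exact zero_ne_one hb'
    · exact not_dense_Rg b n hn
  have hLg : ∀ n : ℕ, ¬ Dense (Lg (H →L[ℂ] H) n) := by
    intro n hL
    apply hRg n
    set Φ : (Fin n → H →L[ℂ] H) → (Fin n → H →L[ℂ] H) := fun a => fun i => star (a i) with hΦ
    have hcont : Continuous Φ := continuous_pi fun i => continuous_star.comp (continuous_apply i)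
    have hsurj : Function.Surjective Φ := by
      intro x
      exact ⟨fun i => star (x i), by funext i; simp [hΦ]⟩
    have hdense : Dense (Φ '' Lg (H →L[ℂ] H) n) := hsurj.denseRange.dense_image hcont hL
    have hsub : Φ '' Lg (H →L[ℂ] H) n ⊆ Rg (H →L[ℂ] H) n := by
      rintro x ⟨a, ⟨bb, hbb⟩, rfl⟩
      refine ⟨fun i => star (bb i), ?_⟩
      calc ∑ i, star (a i) * star (bb i) = ∑ i, star (bb i * a i) := by
            refine Finset.sum_congr rfl fun i _ => ?_
            rw [star_mul]
        _ = star (∑ i, bb i * a i) := by rw [star_sum]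
        _ = 1 := by rw [hbb, star_one]
    exact hdense.mono hsub
  refine ⟨hRg, ?_, ?_⟩
  · have : {N : ℕ∞ | ∃ n : ℕ, N = n ∧ Dense (Rg (H →L[ℂ] H) n)} = ∅ :=
      Set.eq_empty_iff_forall_notMem.mpr fun N ⟨n, _, hd⟩ => hRg n hd
    rw [rtsr, this, sInf_empty]
  · have : {N : ℕ∞ | ∃ n : ℕ, N = n ∧ Dense (Lg (H →L[ℂ] H) n)} = ∅ :=
      Set.eq_empty_iff_forall_notMem.mpr fun N ⟨n, _, hd⟩ => hLg n hd
    rw [ltsr, this, sInf_empty]
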